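/- Linear access, strategic equilibrium has zero welfare: for n ≥ 2 and λ > 1, if c_self ∈ (0, 1/λ] satisfies the symmetric equilibrium condition Σ_{k=0}^{n−1} (1/(k+1))·C(n−1,k)·(λ c_self)^k (1−λ c_self)^{n−1−k} = 1/λ, then 1 − (1 − λ c_self)ⁿ = n·c_self, and hence the social welfare W(c_self) = 1 − (1 − λ c_self)ⁿ − n c_self equals 0. -/

import Mathlib

/-- linear access, strategic equilibrium has zero welfare: for `n ≥ 2`, `λ > 1`,
if `c_self ∈ (0, 1/λ]` satisfies the symmetric equilibrium condition
`Σ_{k=0}^{n−1} (1/(k+1))·C(n−1,k)·(λ c)^k (1−λ c)^{n−1−k} = 1/λ`, then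
`1 − (1 − λ c)ⁿ = n c`, and hence the social welfare `W(c) = 1 − (1 − λ c)ⁿ − n c` is `0`. -/
theorem stmt_5 (n : ℕ) (hn : 2 ≤ n) (lam : ℝ) (hlam : 1 < lam)
    (cself : ℝ) (hc : cself ∈ Set.Ioc 0 lam⁻¹)
    (heq : ∑ k ∈ Finset.range n, (1 / ((k : ℝ) + 1)) * (Nat.choose (n - 1) k : ℝ)
        * (lam * cself) ^ k * (1 - lam * cself) ^ (n - 1 - k) = 1 / lam) :
    1 - (1 - lam * cself) ^ n = n * cself ∧
    1 - (1 - lam * cself) ^ n - n * cself = 0 := by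
  obtain ⟨hc0, hc1⟩ := hc
  have hlam0 : (0:ℝ) < lam := lt_trans one_pos hlam
  set p := lam * cself with hpdef
  have hn1 : 1 ≤ n := le_trans (by norm_num) hn
  have hbinom : ∑ j ∈ Finset.range (n+1),
      (Nat.choose n j : ℝ) * p ^ j * (1 - p) ^ (n - j) = 1 := by
    have h := add_pow p (1 - p) n
    have h1 : p + (1 - p) = 1 := by ring
    rw [h1, one_pow] at h
    have h2 : ∑ j ∈ Finset.range (n+1), (Nat.choose n j : ℝ) * p ^ j * (1 - p) ^ (n - j)
        = ∑ m ∈ Finset.range (n+1), p ^ m * (1 - p) ^ (n - m) * (Nat.choose n m : ℝ) :=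
      Finset.sum_congr rfl (fun k _ => by ring)
    rw [h2, ← h]
  have hsum : ∑ k ∈ Finset.range n,
      (Nat.choose n (k+1) : ℝ) * p ^ (k+1) * (1 - p) ^ (n - (k+1)) = 1 - (1 - p) ^ n := by
    have h := Finset.sum_range_succ' (fun j => (Nat.choose n j : ℝ) * p ^ j * (1 - p) ^ (n - j)) n
    rw [hbinom] at h
    simp only [Nat.choose_zero_right, Nat.cast_one, pow_zero, Nat.sub_zero, one_mul, mul_one] at h
    linarith
  have hterm : ∀ k ∈ Finset.range n,
      (n : ℝ) * p * ((1 / ((k : ℝ) + 1)) * (Nat.choose (n - 1) k : ℝ)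
        * p ^ k * (1 - p) ^ (n - 1 - k))
      = (Nat.choose n (k+1) : ℝ) * p ^ (k+1) * (1 - p) ^ (n - (k+1)) := by
    intro k _
    have hnat : n * Nat.choose (n - 1) k = Nat.choose n (k+1) * (k+1) := by
      have := Nat.add_one_mul_choose_eq (n - 1) k
      rw [Nat.sub_add_cancel hn1] at this
      exact this
    have hcast : (n : ℝ) * (Nat.choose (n - 1) k : ℝ)
        = (Nat.choose n (k+1) : ℝ) * ((k : ℝ) + 1) := by
      exact_mod_cast congrArg (Nat.cast : ℕ → ℝ) hnat
    have hsub : n - 1 - k = n - (k+1) := by omega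
    rw [hsub]
    have hk1 : ((k : ℝ) + 1) ≠ 0 := by positivity
    field_simp
    linear_combination (p ^ k * p * (1 - p) ^ (n - (k+1))) * hcast
  have hmain : 1 - (1 - p) ^ n = (n : ℝ) * cself := by
    calc 1 - (1 - p) ^ n
        = ∑ k ∈ Finset.range n,
            (Nat.choose n (k+1) : ℝ) * p ^ (k+1) * (1 - p) ^ (n - (k+1)) := hsum.symm
      _ = ∑ k ∈ Finset.range n, (n : ℝ) * p * ((1 / ((k : ℝ) + 1)) * (Nat.choose (n - 1) k : ℝ)
            * p ^ k * (1 - p) ^ (n - 1 - k)) := (Finset.sum_congr rfl hterm).symm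
      _ = (n : ℝ) * p * ∑ k ∈ Finset.range n, ((1 / ((k : ℝ) + 1)) * (Nat.choose (n - 1) k : ℝ)
            * p ^ k * (1 - p) ^ (n - 1 - k)) := by rw [Finset.mul_sum]
      _ = (n : ℝ) * p * (1 / lam) := by rw [heq]
      _ = (n : ℝ) * cself := by
            rw [hpdef]
            have hlne : lam ≠ 0 := ne_of_gt hlam0
            field_simp
  exact ⟨hmain, by linarith⟩
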